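/- Let p be a real number and define x_1 = • and, for n ≥ 1, x_{n+1} = Σ_{k=1}^{n} binom(p,k) Σ_{n_1+⋯+n_k=n, n_i≥1} B_+(x_{n_1}x_{n_2}⋯x_{n_k}) in the Connes–Kreimer Hopf algebra H_K, where B_+ is extended linearly to forests. Then this solution of the combinatorial Dyson–Schwinger equation X = 1 + B_+(X^p) in H_K is given explicitly by x_n = Σ_{t : |t| = n} e(t)·C_p(t)·t, the sum over all rooted trees with n vertices, where e(t) is the number of planar rooted trees whose underlying rooted tree is t; equivalently, the coefficient of t in x_n is (1/|Sym(t)|)·∏_{v∈V̄(t)} c(v)!·binom(p, c(v)). -/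

import Mathlib

/-! ### Planar rooted trees -/

/-- A planar rooted tree: a root with an ordered list of branches.
`PTree.node [T₁,…,T_k]` is `B₊(T₁⋯T_k)`; `PTree.node []` is the one-vertex tree `•`. -/
inductive PTree : Type where
  | node : List PTree → PTree

instance : Inhabited PTree := ⟨.node []⟩

noncomputable instance : DecidableEq PTree := Classical.decEq _

/-- Number of vertices of a planar rooted tree. -/
def PTree.size : PTree → ℕ
  | .node l => 1 + (l.attach.map (fun x => PTree.size x.1)).sum
decreasing_by
  have h := List.sizeOf_lt_of_mem x.2
  simp only [PTree.node.sizeOf_spec]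
  omega

/-! ### Rooted trees -/

/-- Isomorphism of the underlying rooted trees: the lists of branches agree
up to permutation and recursive isomorphism. -/
inductive PTree.Equiv : PTree → PTree → Prop where
  | node {l m m' : List PTree} :
      List.Forall₂ PTree.Equiv l m' → List.Perm m' m → PTree.Equiv (.node l) (.node m)

/-- Rooted trees: planar rooted trees modulo isomorphism. -/
def RTree : Type := Quot PTree.Equiv

/-- The underlying rooted tree of a planar rooted tree. -/
def toR : PTree → RTree := Quot.mk _

/-- A choice of planar representative of a rooted tree. -/
noncomputable def RTree.out : RTree → PTree := Quot.out

noncomputable instance : DecidableEq RTree := Classical.decEq _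

/-- The order of the symmetry group of (the underlying rooted tree of) a planar
rooted tree: `|Sym(B₊(t₁⋯t_k))| = (∏_s m_s!)·∏ᵢ |Sym(tᵢ)|`, where `m_s` is the
multiplicity of the isomorphism type `s` among the branches `t₁,…,t_k`. -/
noncomputable def PTree.symOrder : PTree → ℕ
  | .node l =>
      (l.attach.map (fun x => PTree.symOrder x.1)).prod *
      (((l.map toR : List RTree) : Multiset RTree).toFinset.prod
        (fun s => (Multiset.count s (l.map toR : Multiset RTree)).factorial))
decreasing_by
  have h := List.sizeOf_lt_of_mem x.2
  simp only [PTree.node.sizeOf_spec]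
  omega

/-- The order of the symmetry group of a rooted tree. -/
noncomputable def RTree.sym (t : RTree) : ℕ := t.out.symOrder

/-- Number of vertices of a rooted tree. -/
noncomputable def RTree.size (t : RTree) : ℕ := t.out.size

/-- `B₊` for rooted trees: attach a new root to a multiset forest. -/
noncomputable def RTree.node (m : Multiset RTree) : RTree :=
  toR (PTree.node (m.toList.map RTree.out))

/-- The one-vertex rooted tree `•`. -/
noncomputable def RTree.bullet : RTree := toR (.node [])

/-! ### Enumeration of planar trees by size -/

mutual
/-- All planar rooted trees with exactly `n` vertices. -/
def treesOfSize : ℕ → List PTree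
  | 0 => []
  | n + 1 => (forestsOfSize n).map PTree.node
  termination_by n => 2 * n
  decreasing_by omega
/-- All ordered forests of planar rooted trees with `n` vertices in total. -/
def forestsOfSize : ℕ → List (List PTree)
  | 0 => [[]]
  | n + 1 =>
      ((List.range (n + 1)).attach.map (fun j =>
        (treesOfSize (j.1 + 1)).flatMap (fun t =>
          (forestsOfSize (n - j.1)).map (t :: ·)))).flatten
  termination_by n => 2 * n + 1
  decreasing_by
  · have hj := List.mem_range.mp j.2; omega
  · have hj := List.mem_range.mp j.2; omega
end

/-- All rooted trees with exactly `n` vertices. -/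
noncomputable def allRTrees (n : ℕ) : List RTree := ((treesOfSize n).map toR).dedup

/-- `e(t)`: the number of planar rooted trees whose underlying rooted tree is `t`. -/
noncomputable def eCount (t : RTree) : ℕ :=
  ((treesOfSize t.size).filter (fun T => toR T = t)).length

/-! ### The Connes–Kreimer Hopf algebra -/

/-- The Connes–Kreimer Hopf algebra over `k`: the free commutative algebra on
rooted trees, with monomial basis the forests (multisets) of rooted trees. -/
abbrev HK (k : Type*) [CommSemiring k] := AddMonoidAlgebra k (Multiset RTree)

/-- The model for `H_K ⊗ H_K`: monomial basis consists of pairs of forests. -/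
abbrev HK2 (k : Type*) [CommSemiring k] :=
  AddMonoidAlgebra k (Multiset RTree × Multiset RTree)

/-- `B₊` on `H_K`: sends a forest to the tree obtained by attaching a new root,
extended linearly. -/
noncomputable def BplusK (k : Type*) [CommSemiring k] : HK k → HK k :=
  AddMonoidAlgebra.mapDomain (fun w => ({RTree.node w} : Multiset RTree))

/-- The tensor product map `H_K × H_K → H_K ⊗ H_K` in the pair model. -/
noncomputable def tensHK (k : Type*) [CommSemiring k] (f g : HK k) : HK2 k :=
  f.coeff.sum (fun a x => g.coeff.sum (fun b y => AddMonoidAlgebra.single (a, b) (x * y)))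

/-- The binomial coefficient `binom(p,k) = p(p−1)⋯(p−k+1)/k!` of a real number `p`. -/
noncomputable def rbinom (p : ℝ) (n : ℕ) : ℝ :=
  (∏ i ∈ Finset.range n, (p - i)) / (n.factorial : ℝ)

/-- `C_p(T) = ∏_{v ∈ V̄(T)} binom(p, c(v))`, where `c(v)` is the number of children
of `v` (vertices with no children contribute the factor `binom(p,0) = 1`). -/
noncomputable def Cp (p : ℝ) : PTree → ℝ
  | .node l => rbinom p l.length * (l.attach.map (fun x => Cp p x.1)).prod
decreasing_by
  have h := List.sizeOf_lt_of_mem x.2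
  simp only [PTree.node.sizeOf_spec]
  omega

/-- `C_p(t)` for a rooted tree. -/
noncomputable def CpR (p : ℝ) (t : RTree) : ℝ := Cp p t.out

/-- All compositions of `n` into exactly `k` positive parts. -/
def compositionsList : ℕ → ℕ → List (List ℕ)
  | n, 0 => if n = 0 then [[]] else []
  | n, k + 1 =>
      ((List.range n).map (fun i =>
        (compositionsList (n - (i + 1)) k).map ((i + 1) :: ·))).flatten

/-- The homogeneous components `x_n = Σ_{|t| = n} e(t)·C_p(t)·t` of the solution of
the combinatorial Dyson–Schwinger equation `X = 1 + B₊(X^p)` in `H_K`. -/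
noncomputable def xK (p : ℝ) (n : ℕ) : HK ℝ :=
  ((allRTrees n).map (fun t =>
    AddMonoidAlgebra.single ({t} : Multiset RTree) ((eCount t : ℝ) * CpR p t))).sum

/-- `∏_{v ∈ V̄(t)} c(v)!·binom(p, c(v))` over the vertices of a planar tree. -/
noncomputable def cfactCp (p : ℝ) : PTree → ℝ
  | .node l => ((l.length.factorial : ℝ) * rbinom p l.length)
      * (l.attach.map (fun x => cfactCp p x.1)).prod
decreasing_by
  have h := List.sizeOf_lt_of_mem x.2
  simp only [PTree.node.sizeOf_spec]
  omega


/-- strong induction for PTree -/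
theorem PTree.ind {motive : PTree → Prop}
    (h : ∀ l : List PTree, (∀ t ∈ l, motive t) → motive (.node l)) : ∀ t, motive t := by
  have key : ∀ n (t : PTree), sizeOf t ≤ n → motive t := by
    intro n
    induction n with
    | zero => intro t ht; cases t with | node l => simp at ht
    | succ n ih =>
      intro t ht
      cases t with
      | node l =>
        refine h l (fun s hs => ih s ?_)
        have := List.sizeOf_lt_of_mem hs
        simp only [PTree.node.sizeOf_spec] at ht
        omega
  exact fun t => key (sizeOf t) t le_rfl

theorem PTree.size_node (l : List PTree) :
    PTree.size (.node l) = 1 + (l.map PTree.size).sum := by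
  rw [PTree.size, List.attach_map_val]

theorem PTree.Equiv.refl : ∀ t, PTree.Equiv t t := by
  intro t
  induction t using PTree.ind with
  | h l ih =>
    exact PTree.Equiv.node (List.forall₂_same.2 ih) (List.Perm.refl _)

private theorem forall₂_congr_mem {r r' : PTree → PTree → Prop} :
    ∀ {l m : List PTree}, List.Forall₂ r l m → (∀ a ∈ l, ∀ b ∈ m, r a b → r' a b) →
      List.Forall₂ r' l m := by
  intro l m h
  induction h with
  | nil => intro; exact List.Forall₂.nil
  | cons h₁ h₂ ih =>
    intro hmem
    exact List.Forall₂.cons (hmem _ (by simp) _ (by simp) h₁)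
      (ih fun a ha b hb => hmem a (by simp [ha]) b (by simp [hb]))

theorem PTree.Equiv.symm : ∀ {t s : PTree}, PTree.Equiv t s → PTree.Equiv s t := by
  intro t
  induction t using PTree.ind with
  | h l ih =>
    intro s h
    cases h with
    | @node _ m m' hf hp =>
      -- hf : Forall₂ Equiv l m', hp : m' ~ m. Want Equiv (node m) (node l).
      have hf' : List.Forall₂ PTree.Equiv m' l :=
        List.Forall₂.flip (forall₂_congr_mem hf (fun a ha b _ hr => ih a ha hr))
      obtain ⟨u, hu1, hu2⟩ := List.perm_comp_forall₂ hp.symm hf'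
      exact PTree.Equiv.node hu1 hu2

private theorem forall₂_trans_mem {α β γ : Type*} {r : α → β → Prop} {r' : β → γ → Prop}
    {r'' : α → γ → Prop} :
    ∀ {l : List α} {m : List β} {k : List γ}, List.Forall₂ r l m → List.Forall₂ r' m k →
      (∀ a ∈ l, ∀ b ∈ m, ∀ c ∈ k, r a b → r' b c → r'' a c) → List.Forall₂ r'' l k := by
  intro l m k h1
  induction h1 generalizing k with
  | nil => intro h2 _; cases h2; exact List.Forall₂.nil
  | @cons a b l' m' hab h' ih' =>
    intro h2 hmem
    cases h2 with
    | @cons _ c _ k' hbc h'' =>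
      exact List.Forall₂.cons (hmem a (by simp) b (by simp) c (by simp) hab hbc)
        (ih' h'' fun x hx y hy z hz => hmem x (by simp [hx]) y (by simp [hy]) z (by simp [hz]))

theorem PTree.Equiv.trans : ∀ {t s u : PTree},
    PTree.Equiv t s → PTree.Equiv s u → PTree.Equiv t u := by
  intro t
  induction t using PTree.ind with
  | h l ih =>
    intro s u h1 h2
    cases h1 with
    | @node _ m m₁ hf1 hp1 =>
      cases h2 with
      | @node _ k k₁ hf2 hp2 =>
        obtain ⟨k₂, hk1, hk2⟩ := List.perm_comp_forall₂ hp1 hf2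
        -- hk1 : Forall₂ Equiv m₁ k₂, hk2 : k₂ ~ k₁
        have : List.Forall₂ PTree.Equiv l k₂ :=
          forall₂_trans_mem hf1 hk1 (fun a ha b _ c _ h1 h2 => ih a ha h1 h2)
        exact PTree.Equiv.node this (hk2.trans hp2)

theorem PTree.equivalence : Equivalence PTree.Equiv :=
  ⟨PTree.Equiv.refl, PTree.Equiv.symm, PTree.Equiv.trans⟩

theorem toR_eq_iff {t s : PTree} : toR t = toR s ↔ PTree.Equiv t s := by
  show Quot.mk _ t = Quot.mk _ s ↔ _
  rw [Quot.eq, PTree.equivalence.eqvGen_iff]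

/-! ### Equation lemmas -/

theorem PTree.symOrder_node (l : List PTree) :
    PTree.symOrder (.node l) = (l.map PTree.symOrder).prod *
      (((l.map toR : List RTree) : Multiset RTree).toFinset.prod
        (fun s => (Multiset.count s (l.map toR : Multiset RTree)).factorial)) := by
  rw [PTree.symOrder, List.attach_map_val]

theorem Cp_node (p : ℝ) (l : List PTree) :
    Cp p (.node l) = rbinom p l.length * (l.map (Cp p)).prod := by
  rw [Cp, List.attach_map_val]

theorem cfactCp_node (p : ℝ) (l : List PTree) :
    cfactCp p (.node l) = ((l.length.factorial : ℝ) * rbinom p l.length)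
      * (l.map (cfactCp p)).prod := by
  rw [cfactCp, List.attach_map_val]

/-! ### Multiset.Rel on coercions -/

theorem rel_coe_iff {α β : Type*} {r : α → β → Prop} {l : List α} {m : List β} :
    Multiset.Rel r ↑l ↑m ↔ ∃ m', List.Forall₂ r l m' ∧ m'.Perm m := by
  constructor
  · intro h
    induction l generalizing m with
    | nil =>
      have : (m : Multiset β) = 0 := by simpa using h
      have hm : m = [] := by simpa using this
      subst hm
      exact ⟨[], List.Forall₂.nil, List.Perm.refl _⟩
    | cons a l ih =>
      rw [show ((a :: l : List α) : Multiset α) = a ::ₘ ↑l from rfl,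
        Multiset.rel_cons_left] at h
      obtain ⟨b, bs', hab, hrel, hbs⟩ := h
      obtain ⟨m₂, rfl⟩ : ∃ m₂ : List β, bs' = ↑m₂ := ⟨bs'.toList, (Multiset.coe_toList _).symm⟩
      obtain ⟨m', hf, hp⟩ := ih hrel
      refine ⟨b :: m', List.Forall₂.cons hab hf, ?_⟩
      have : (m : Multiset β) = ↑(b :: m₂) := by simpa using hbs
      exact ((hp.cons b).trans (Multiset.coe_eq_coe.1 this).symm)
  · rintro ⟨m', hf, hp⟩
    have h1 : ∀ {l' : List α} {m'' : List β}, List.Forall₂ r l' m'' →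
        Multiset.Rel r ↑l' ↑m'' := by
      intro l' m'' hf'
      induction hf' with
      | nil => exact Multiset.Rel.zero
      | cons hab _ ih2 => exact Multiset.Rel.cons hab ih2
    rw [← Multiset.coe_eq_coe.2 hp]
    exact h1 hf

private theorem forall₂_map_eq {α β γ : Type*} {r : α → β → Prop} {f : α → γ} {g : β → γ}
    {l : List α} {m : List β} (h : List.Forall₂ r l m)
    (hm : ∀ a ∈ l, ∀ b ∈ m, r a b → f a = g b) : l.map f = m.map g := by
  induction h with
  | nil => rfl
  | cons hab h' ih =>
    simp only [List.map_cons]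
    rw [hm _ (by simp) _ (by simp) hab,
      ih fun a ha b hb hr => hm a (by simp [ha]) b (by simp [hb]) hr]

theorem equiv_node_iff {l m : List PTree} :
    PTree.Equiv (.node l) (.node m) ↔
      ((l.map toR : List RTree) : Multiset RTree) = ((m.map toR : List RTree) : Multiset RTree) := by
  constructor
  · intro h
    cases h with
    | @node _ _ m' hf hp =>
      calc ((l.map toR : List RTree) : Multiset RTree)
          = ↑(m'.map toR) := by
            rw [forall₂_map_eq hf (fun a _ b _ hr => toR_eq_iff.2 hr)]
        _ = ↑(m.map toR) := Multiset.coe_eq_coe.2 (List.Perm.map toR hp)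
  · intro h
    have : Multiset.Rel (fun a b => toR a = toR b) ↑l ↑m := by
      rw [← Multiset.rel_map (f := toR) (g := toR)]
      · rw [show Multiset.map toR ↑l = ((l.map toR : List RTree) : Multiset RTree) from rfl,
          show Multiset.map toR ↑m = ((m.map toR : List RTree) : Multiset RTree) from rfl, h]
        exact Multiset.rel_eq.2 rfl
    have : Multiset.Rel PTree.Equiv ↑l ↑m :=
      this.mono fun a _ b _ hr => toR_eq_iff.1 hr
    obtain ⟨m', hf, hp⟩ := rel_coe_iff.1 this
    exact PTree.Equiv.node hf hp
/-! ### Invariance under Equiv -/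

theorem size_equiv : ∀ {t s : PTree}, PTree.Equiv t s → t.size = s.size := by
  intro t
  induction t using PTree.ind with
  | h l ih =>
    intro s h
    cases h with
    | @node _ m m' hf hp =>
      rw [PTree.size_node, PTree.size_node,
        forall₂_map_eq hf (fun a ha b _ hr => ih a ha hr),
        (hp.map PTree.size).sum_eq]

theorem Cp_equiv (p : ℝ) : ∀ {t s : PTree}, PTree.Equiv t s → Cp p t = Cp p s := by
  intro t
  induction t using PTree.ind with
  | h l ih =>
    intro s h
    cases h with
    | @node _ m m' hf hp =>
      rw [Cp_node, Cp_node, hf.length_eq, hp.length_eq,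
        forall₂_map_eq hf (fun a ha b _ hr => ih a ha hr), (hp.map (Cp p)).prod_eq]

theorem symOrder_equiv : ∀ {t s : PTree}, PTree.Equiv t s → t.symOrder = s.symOrder := by
  intro t
  induction t using PTree.ind with
  | h l ih =>
    intro s h
    obtain ⟨m⟩ := s
    have hcl := equiv_node_iff.1 h
    cases h with
    | @node _ _ m' hf hp =>
      rw [PTree.symOrder_node, PTree.symOrder_node,
        forall₂_map_eq hf (fun a ha b _ hr => ih a ha hr),
        (hp.map PTree.symOrder).prod_eq, hcl]

theorem out_equiv (T : PTree) : PTree.Equiv ((toR T).out) T :=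
  toR_eq_iff.1 (Quot.out_eq (toR T))

theorem RTree.size_toR (T : PTree) : RTree.size (toR T) = T.size :=
  size_equiv (out_equiv T)

theorem CpR_toR (p : ℝ) (T : PTree) : CpR p (toR T) = Cp p T :=
  Cp_equiv p (out_equiv T)

theorem RTree.sym_toR (T : PTree) : RTree.sym (toR T) = T.symOrder :=
  symOrder_equiv (out_equiv T)
/-! ### Sizes in enumerations -/

theorem PTree.size_pos (T : PTree) : 1 ≤ T.size := by
  obtain ⟨l⟩ := T; rw [PTree.size_node]; omega

theorem forests_size_lemma : ∀ n : ℕ, ∀ m ∈ forestsOfSize n, (m.map PTree.size).sum = n := by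
  intro n
  induction n using Nat.strong_induction_on with
  | _ n ih =>
    cases n with
    | zero =>
      intro m hm
      rw [forestsOfSize] at hm
      simp at hm
      simp [hm]
    | succ n =>
      intro m hm
      rw [forestsOfSize] at hm
      rw [List.mem_flatten] at hm
      obtain ⟨L, hL, hmL⟩ := hm
      rw [List.mem_map] at hL
      obtain ⟨j, -, rfl⟩ := hL
      rw [List.mem_flatMap] at hmL
      obtain ⟨t, ht, hmem⟩ := hmL
      rw [List.mem_map] at hmem
      obtain ⟨rest, hrest, rfl⟩ := hmem
      have hj : j.1 < n + 1 := List.mem_range.1 j.2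
      rw [treesOfSize] at ht
      obtain ⟨m', hm', rfl⟩ := List.mem_map.1 ht
      have h1 := ih j.1 (by omega) m' hm'
      have h2 := ih (n - j.1) (by omega) rest hrest
      simp only [List.map_cons, List.sum_cons, PTree.size_node, h1, h2]
      omega

theorem treesOfSize_size {n : ℕ} {T : PTree} (h : T ∈ treesOfSize n) : T.size = n := by
  cases n with
  | zero => simp [treesOfSize] at h
  | succ n =>
    rw [treesOfSize] at h
    obtain ⟨m, hm, rfl⟩ := List.mem_map.1 h
    rw [PTree.size_node, forests_size_lemma n m hm]
    omega

theorem forestsOfSize_size {n : ℕ} {m : List PTree} (h : m ∈ forestsOfSize n) :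
    (m.map PTree.size).sum = n := forests_size_lemma n m h

theorem RTree.node_toR (l : List PTree) :
    RTree.node ((l.map toR : List RTree) : Multiset RTree) = toR (.node l) := by
  rw [RTree.node]
  apply toR_eq_iff.2
  apply equiv_node_iff.2
  rw [List.map_map]
  have : (toR ∘ RTree.out) = id := funext fun t => Quot.out_eq t
  rw [this, List.map_id]
  rw [show (((((l.map toR : List RTree) : Multiset RTree)).toList : List RTree) : Multiset RTree)
    = ((l.map toR : List RTree) : Multiset RTree) from Multiset.coe_toList _]
/-! ### Counting helpers -/

private theorem list_sum_map_range {M : Type*} [AddCommMonoid M] (n : ℕ) (G : ℕ → M) :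
    ((List.range n).map G).sum = ∑ j ∈ Finset.range n, G j := by
  induction n with
  | zero => simp
  | succ n ih => rw [List.range_succ, Finset.sum_range_succ, List.map_append, List.sum_append, ih]; simp

private theorem list_sum_finset_sum {α β M : Type*} [AddCommMonoid M] (L : List α)
    (F : Finset β) (g : β → α → M) :
    (L.map (fun t => ∑ s ∈ F, g s t)).sum = ∑ s ∈ F, (L.map (g s)).sum := by
  induction L with
  | nil => simp
  | cons a L ih => simp [ih, Finset.sum_add_distrib]

private theorem list_sum_ite_count {α : Type*} (L : List α) (p : α → Prop) [DecidablePred p]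
    (c : ℕ) : (L.map (fun t => if p t then c else 0)).sum = L.countP (fun t => decide (p t)) * c := by
  induction L with
  | nil => simp
  | cons a L ih =>
    by_cases h : p a <;> simp [List.countP_cons, h, ih, Nat.add_mul, Nat.add_comm]

/-! ### Counting forests with given class multiset -/

noncomputable def classesM (m : List PTree) : Multiset RTree := ↑(m.map toR)

noncomputable def sizeSumR (μ : Multiset RTree) : ℕ := (μ.map RTree.size).sum

noncomputable def NN (μ : Multiset RTree) : ℕ :=
  List.countP (fun m => decide (classesM m = μ)) (forestsOfSize (sizeSumR μ))

theorem RTree.size_pos (t : RTree) : 1 ≤ RTree.size t := PTree.size_pos _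

theorem sizeSumR_classesM (m : List PTree) : sizeSumR (classesM m) = (m.map PTree.size).sum := by
  rw [sizeSumR, classesM]
  rw [show Multiset.map RTree.size ↑(m.map toR) = ↑((m.map toR).map RTree.size) from rfl]
  rw [List.map_map]
  rw [show (RTree.size ∘ toR) = PTree.size from funext RTree.size_toR]
  exact Multiset.sum_coe _

theorem sizeSumR_erase {μ : Multiset RTree} {s : RTree} (h : s ∈ μ) :
    sizeSumR μ = RTree.size s + sizeSumR (μ.erase s) := by
  conv_lhs => rw [← Multiset.cons_erase h]
  rw [sizeSumR, sizeSumR, Multiset.map_cons, Multiset.sum_cons]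

theorem size_le_sizeSumR {μ : Multiset RTree} {s : RTree} (h : s ∈ μ) :
    RTree.size s ≤ sizeSumR μ := by rw [sizeSumR_erase h]; omega

theorem eCount_countP (t : RTree) :
    eCount t = List.countP (fun T => decide (toR T = t)) (treesOfSize (RTree.size t)) := by
  rw [eCount, List.countP_eq_length_filter]

theorem countP_treesOfSize_ne {s : RTree} {w : ℕ} (h : RTree.size s ≠ w) :
    List.countP (fun T => decide (toR T = s)) (treesOfSize w) = 0 := by
  rw [List.countP_eq_zero]
  intro T hT hs
  simp only [decide_eq_true_eq] at hs
  exact h (by rw [← hs, RTree.size_toR, treesOfSize_size hT])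

theorem NN_rec {μ : Multiset RTree} (hμ : μ ≠ 0) :
    NN μ = ∑ s ∈ μ.toFinset, eCount s * NN (μ.erase s) := by
  obtain ⟨s₀, hs₀⟩ := Multiset.exists_mem_of_ne_zero hμ
  have hpos : 1 ≤ sizeSumR μ := le_trans (RTree.size_pos s₀) (size_le_sizeSumR hs₀)
  obtain ⟨m, hm⟩ : ∃ m, sizeSumR μ = m + 1 := ⟨sizeSumR μ - 1, by omega⟩
  rw [NN, hm, forestsOfSize, List.countP_flatten, List.map_map]
  rw [show ((List.countP fun mm => decide (classesM mm = μ)) ∘ fun j =>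
      (treesOfSize (j.1 + 1)).flatMap fun t => (forestsOfSize (m - j.1)).map (t :: ·)) =
      (fun (j : {x // x ∈ List.range (m+1)}) => (fun jv =>
        List.countP (fun mm => decide (classesM mm = μ))
          ((treesOfSize (jv + 1)).flatMap fun t =>
            (forestsOfSize (m - jv)).map (t :: ·))) j.1) from rfl]
  set G : ℕ → ℕ := fun jv =>
        List.countP (fun mm => decide (classesM mm = μ))
          ((treesOfSize (jv + 1)).flatMap fun t =>
            (forestsOfSize (m - jv)).map (t :: ·)) with hG
  rw [List.attach_map_val, list_sum_map_range]
  simp only [hG]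
  have step1 : ∀ j ∈ Finset.range (m + 1),
      List.countP (fun mm => decide (classesM mm = μ))
        ((treesOfSize (j + 1)).flatMap fun t => (forestsOfSize (m - j)).map (t :: ·)) =
      ∑ s ∈ μ.toFinset,
        (List.countP (fun T => decide (toR T = s)) (treesOfSize (j + 1))) * NN (μ.erase s) := by
    intro j hj
    rw [Finset.mem_range] at hj
    rw [List.countP_flatMap]
    have inner : ∀ t ∈ treesOfSize (j + 1),
        ((List.countP fun mm => decide (classesM mm = μ)) ∘ fun t =>
          (forestsOfSize (m - j)).map (t :: ·)) t
        = ∑ s ∈ μ.toFinset, (if toR t = s then NN (μ.erase s) else 0) := by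
      intro t ht
      show List.countP _ ((forestsOfSize (m - j)).map (t :: ·)) = _
      rw [List.countP_map]
      rw [Finset.sum_ite_eq μ.toFinset (toR t) (fun s => NN (μ.erase s))]
      simp only [Multiset.mem_toFinset]
      by_cases hmem : toR t ∈ μ
      · simp only [hmem, if_true]
        have hsz : RTree.size (toR t) = j + 1 := by
          rw [RTree.size_toR, treesOfSize_size ht]
        have hforest : m - j = sizeSumR (μ.erase (toR t)) := by
          have := sizeSumR_erase hmem
          rw [hm, hsz] at this
          omega
        rw [NN, ← hforest]
        apply List.countP_congr
        intro rest _
        simp only [Function.comp_apply, decide_eq_true_eq]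
        constructor
        · intro hcl
          have : classesM (t :: rest) = toR t ::ₘ classesM rest := rfl
          rw [this] at hcl
          rw [← hcl, Multiset.erase_cons_head]
        · intro hcl
          show classesM (t :: rest) = μ
          have : classesM (t :: rest) = toR t ::ₘ classesM rest := rfl
          rw [this, hcl, Multiset.cons_erase hmem]
      · simp only [hmem, if_false]
        rw [List.countP_eq_zero]
        intro rest _ hcl
        simp only [Function.comp_apply, decide_eq_true_eq] at hcl
        apply hmem
        have : classesM (t :: rest) = toR t ::ₘ classesM rest := rfl
        rw [this] at hcl
        rw [← hcl]
        exact Multiset.mem_cons_self _ _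
    rw [List.map_congr_left inner, list_sum_finset_sum]
    refine Finset.sum_congr rfl fun s _ => ?_
    exact list_sum_ite_count (treesOfSize (j + 1)) (fun t => toR t = s) (NN (μ.erase s))
  rw [Finset.sum_congr rfl step1, Finset.sum_comm]
  refine Finset.sum_congr rfl fun s hs => ?_
  rw [Multiset.mem_toFinset] at hs
  have h1 : 1 ≤ RTree.size s := RTree.size_pos s
  have h2 : RTree.size s ≤ m + 1 := by rw [← hm]; exact size_le_sizeSumR hs
  rw [Finset.sum_eq_single_of_mem (RTree.size s - 1)
    (Finset.mem_range.2 (by omega))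
    (fun j _ hne => by rw [countP_treesOfSize_ne (by omega), Nat.zero_mul])]
  rw [show RTree.size s - 1 + 1 = RTree.size s from by omega, ← eCount_countP]
/-! ### The product formula for NN -/

theorem NN_zero : NN 0 = 1 := by
  have h0 : sizeSumR 0 = 0 := by simp [sizeSumR]
  rw [NN, h0, forestsOfSize]
  simp [classesM]

theorem NN_formula : ∀ μ : Multiset RTree,
    NN μ * (μ.toFinset.prod fun s => (μ.count s).factorial) =
      (Multiset.card μ).factorial * (μ.map (fun s => eCount s)).prod := by
  intro μ
  induction μ using Multiset.strongInductionOn with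
  | _ μ ih =>
    by_cases hμ : μ = 0
    · subst hμ; simp [NN_zero]
    · rw [NN_rec hμ, Finset.sum_mul]
      have key : ∀ s ∈ μ.toFinset,
          eCount s * NN (μ.erase s) * (μ.toFinset.prod fun u => (μ.count u).factorial) =
          μ.count s * ((Multiset.card μ - 1).factorial * (μ.map (fun u => eCount u)).prod) := by
        intro s hs
        rw [Multiset.mem_toFinset] at hs
        have hsub : (μ.erase s).toFinset ⊆ μ.toFinset :=
          Multiset.toFinset_subset.2 (Multiset.erase_subset s μ)
        have hprod : ((μ.erase s).toFinset.prod fun u => ((μ.erase s).count u).factorial) =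
            (μ.toFinset.prod fun u => ((μ.erase s).count u).factorial) := by
          apply Finset.prod_subset hsub
          intro u _ hu
          rw [Multiset.mem_toFinset, ← Multiset.count_pos] at hu
          have : (μ.erase s).count u = 0 := by omega
          rw [this]; rfl
        have hA : (μ.toFinset.prod fun u => (μ.count u).factorial) =
            μ.count s * (μ.toFinset.prod fun u => ((μ.erase s).count u).factorial) := by
          rw [← Finset.mul_prod_erase μ.toFinset _ (Multiset.mem_toFinset.2 hs),
            ← Finset.mul_prod_erase μ.toFinset _ (Multiset.mem_toFinset.2 hs)]
          rw [Multiset.count_erase_self]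
          have hcpos : 0 < μ.count s := Multiset.count_pos.2 hs
          rw [← Nat.mul_factorial_pred hcpos.ne']
          have : (Finset.prod (μ.toFinset.erase s) fun u => ((μ.erase s).count u).factorial) =
              (Finset.prod (μ.toFinset.erase s) fun u => (μ.count u).factorial) := by
            apply Finset.prod_congr rfl
            intro u hu
            rw [Multiset.count_erase_of_ne (Finset.ne_of_mem_erase hu)]
          rw [this]
          ring
        have hIH := ih (μ.erase s) (Multiset.erase_lt.2 hs)
        have hcard : Multiset.card (μ.erase s) = Multiset.card μ - 1 := by
          rw [Multiset.card_erase_of_mem hs]; rfl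
        have hmap : (μ.map (fun u => eCount u)).prod =
            eCount s * ((μ.erase s).map (fun u => eCount u)).prod := by
          conv_lhs => rw [← Multiset.cons_erase hs]
          rw [Multiset.map_cons, Multiset.prod_cons]
        calc eCount s * NN (μ.erase s) * (μ.toFinset.prod fun u => (μ.count u).factorial)
            = μ.count s * (eCount s *
              (NN (μ.erase s) * (μ.toFinset.prod fun u => ((μ.erase s).count u).factorial))) := by
              rw [hA]; ring
          _ = μ.count s * (eCount s *
              ((Multiset.card μ - 1).factorial * ((μ.erase s).map (fun u => eCount u)).prod)) := by
              rw [← hprod, hIH, hcard]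
          _ = μ.count s * ((Multiset.card μ - 1).factorial * (μ.map (fun u => eCount u)).prod) := by
              rw [hmap]; ring
      rw [Finset.sum_congr rfl key, ← Finset.sum_mul, Multiset.toFinset_sum_count_eq]
      have hcardpos : 0 < Multiset.card μ := Multiset.card_pos.2 hμ
      rw [← Nat.mul_factorial_pred hcardpos.ne']
      ring

/-! ### `cfact` and the main counting identity -/

def cfact : PTree → ℕ
  | .node l => l.length.factorial * (l.attach.map (fun x => cfact x.1)).prod
decreasing_by
  have h := List.sizeOf_lt_of_mem x.2
  simp only [PTree.node.sizeOf_spec]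
  omega

theorem cfact_node (l : List PTree) :
    cfact (.node l) = l.length.factorial * (l.map cfact).prod := by
  rw [cfact, List.attach_map_val]

theorem eCount_mul_symOrder : ∀ T : PTree, eCount (toR T) * T.symOrder = cfact T := by
  intro T
  induction T using PTree.ind with
  | h l ih =>
    have hsize : RTree.size (toR (.node l)) = sizeSumR (classesM l) + 1 := by
      rw [RTree.size_toR, PTree.size_node, sizeSumR_classesM]
      omega
    have hcount : eCount (toR (.node l)) = NN (classesM l) := by
      rw [eCount_countP, hsize, NN, treesOfSize, List.countP_map]
      apply List.countP_congr
      intro m _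
      simp only [Function.comp_apply, decide_eq_true_eq]
      rw [show toR (PTree.node m) = toR (PTree.node l) ↔ PTree.Equiv (.node m) (.node l)
        from toR_eq_iff, equiv_node_iff]
      exact Iff.rfl
    have hcard : Multiset.card (classesM l) = l.length := by simp [classesM]
    have hmapE : ((classesM l).map (fun u => eCount u)).prod
        = (l.map (fun T => eCount (toR T))).prod := by
      rw [classesM, show Multiset.map (fun u => eCount u) ↑(l.map toR)
        = ↑((l.map toR).map (fun u => eCount u)) from rfl, List.map_map]
      rfl
    rw [hcount, PTree.symOrder_node]
    calc NN (classesM l) * ((l.map PTree.symOrder).prod *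
          ((classesM l).toFinset.prod fun s => ((classesM l).count s).factorial))
        = NN (classesM l) * ((classesM l).toFinset.prod fun s => ((classesM l).count s).factorial)
          * (l.map PTree.symOrder).prod := by ring
      _ = (Multiset.card (classesM l)).factorial * ((classesM l).map (fun u => eCount u)).prod
          * (l.map PTree.symOrder).prod := by rw [NN_formula]
      _ = l.length.factorial * ((l.map (fun T => eCount (toR T))).prod
          * (l.map PTree.symOrder).prod) := by rw [hcard, hmapE]; ring
      _ = l.length.factorial * (l.map (fun T => eCount (toR T) * T.symOrder)).prod := by
          rw [List.prod_map_mul]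
      _ = cfact (.node l) := by
          rw [cfact_node, List.map_congr_left (fun T hT => ih T hT)]
theorem PTree.symOrder_pos : ∀ T : PTree, 0 < T.symOrder := by
  intro T
  induction T using PTree.ind with
  | h l ih =>
    rw [PTree.symOrder_node]
    apply Nat.mul_pos
    · exact List.prod_pos (by
        intro a ha
        obtain ⟨T, hT, rfl⟩ := List.mem_map.1 ha
        exact ih T hT)
    · exact Finset.prod_pos fun s _ => Nat.factorial_pos _

theorem cfactCp_eq (p : ℝ) : ∀ T : PTree, cfactCp p T = (cfact T : ℝ) * Cp p T := by
  intro T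
  induction T using PTree.ind with
  | h l ih =>
    rw [cfactCp_node, cfact_node, Cp_node, List.map_congr_left (fun T hT => ih T hT),
      List.prod_map_mul]
    push_cast [Nat.cast_list_prod, List.map_map]
    rw [show ((Nat.cast : ℕ → ℝ) ∘ cfact) = fun T : PTree => ((cfact T : ℝ)) from rfl]
    ring

theorem part2_lemma (p : ℝ) (t : RTree) :
    (eCount t : ℝ) * CpR p t = ((RTree.sym t : ℝ))⁻¹ * cfactCp p t.out := by
  have h := eCount_mul_symOrder t.out
  rw [show toR t.out = t from Quot.out_eq t] at h
  have hsym : RTree.sym t = (t.out).symOrder := rfl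
  have hpos : 0 < RTree.sym t := PTree.symOrder_pos _
  have hne : (RTree.sym t : ℝ) ≠ 0 := Nat.cast_ne_zero.2 (by omega)
  rw [cfactCp_eq, show CpR p t = Cp p t.out from rfl]
  rw [show (cfact t.out : ℝ) = (eCount t : ℝ) * (RTree.sym t : ℝ) from by
    rw [hsym, ← h]; push_cast; ring]
  field_simp
/-! ### Part 1: the recursion -/

noncomputable def yK (p : ℝ) (n : ℕ) : HK ℝ :=
  ((treesOfSize n).map (fun T =>
    AddMonoidAlgebra.single ({toR T} : Multiset RTree) (Cp p T))).sum

theorem xK_eq_yK (p : ℝ) (n : ℕ) : xK p n = yK p n := by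
  classical
  set L := treesOfSize n with hL
  set M := L.map toR with hM
  set g : RTree → HK ℝ := fun t => AddMonoidAlgebra.single ({t} : Multiset RTree) (CpR p t)
    with hg
  have hcount : ∀ t ∈ (M : Multiset RTree).toFinset,
      (eCount t : ℝ) = (Multiset.count t (M : Multiset RTree) : ℝ) := by
    intro t ht
    rw [Multiset.mem_toFinset] at ht
    obtain ⟨T, hT, rfl⟩ := List.mem_map.1 (by exact_mod_cast ht)
    have hsz : RTree.size (toR T) = n := by rw [RTree.size_toR, treesOfSize_size hT]
    rw [eCount_countP, hsz]
    congr 1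
    rw [Multiset.coe_count, List.count_eq_countP, hM, List.countP_map]
    apply List.countP_congr
    intro T' _
    simp
  have step1 : xK p n = ∑ t ∈ (M : Multiset RTree).toFinset,
      Multiset.count t (M : Multiset RTree) • g t := by
    rw [xK, allRTrees]
    rw [show ((L.map toR).dedup.map (fun t =>
        AddMonoidAlgebra.single ({t} : Multiset RTree) ((eCount t : ℝ) * CpR p t))).sum
      = (Multiset.map (fun t =>
        AddMonoidAlgebra.single ({t} : Multiset RTree) ((eCount t : ℝ) * CpR p t))
          ((M : Multiset RTree).toFinset.val)).sum from rfl]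
    rw [Finset.sum]
    apply Finset.sum_congr rfl
    intro t ht
    rw [hcount t ht, hg]
    rw [AddMonoidAlgebra.smul_single]
    congr 1
    rw [nsmul_eq_mul]
  rw [step1, ← Finset.sum_multiset_map_count]
  rw [show Multiset.map g (M : Multiset RTree) = ((M.map g : List (HK ℝ)) : Multiset (HK ℝ))
    from rfl]
  rw [Multiset.sum_coe, hM, List.map_map, yK]
  apply congrArg
  apply List.map_congr_left
  intro T _
  show AddMonoidAlgebra.single {toR T} (CpR p (toR T)) = _
  rw [CpR_toR]
def forestsOfComp : List ℕ → List (List PTree)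
  | [] => [[]]
  | c :: cs => (treesOfSize c).flatMap (fun t => (forestsOfComp cs).map (t :: ·))

theorem compositionsList_length : ∀ k n : ℕ, ∀ c ∈ compositionsList n k, c.length = k := by
  intro k
  induction k with
  | zero =>
    intro n c hc
    rw [compositionsList] at hc
    by_cases h : n = 0 <;> simp [h] at hc
    simp [hc]
  | succ k ih =>
    intro n c hc
    rw [compositionsList, List.mem_flatten] at hc
    obtain ⟨L, hL, hcL⟩ := hc
    obtain ⟨i, -, rfl⟩ := List.mem_map.1 hL
    obtain ⟨c', hc', rfl⟩ := List.mem_map.1 hcL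
    simp [ih _ c' hc']

theorem compositionsList_mem_pos : ∀ k n : ℕ, ∀ c ∈ compositionsList n k, ∀ a ∈ c,
    1 ≤ a ∧ a ≤ n := by
  intro k
  induction k with
  | zero =>
    intro n c hc a ha
    rw [compositionsList] at hc
    by_cases h : n = 0 <;> simp [h] at hc
    subst hc; simp at ha
  | succ k ih =>
    intro n c hc a ha
    rw [compositionsList, List.mem_flatten] at hc
    obtain ⟨L, hL, hcL⟩ := hc
    obtain ⟨i, hi, rfl⟩ := List.mem_map.1 hL
    obtain ⟨c', hc', rfl⟩ := List.mem_map.1 hcL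
    rw [List.mem_range] at hi
    rcases List.mem_cons.1 ha with rfl | ha'
    · omega
    · have := ih _ c' hc' a ha'
      omega

theorem compositionsList_empty {n k : ℕ} (h : n < k) : compositionsList n k = [] := by
  induction k generalizing n with
  | zero => omega
  | succ k ih =>
    rw [compositionsList, List.flatten_eq_nil_iff]
    intro L hL
    obtain ⟨i, hi, rfl⟩ := List.mem_map.1 hL
    rw [List.mem_range] at hi
    rw [ih (by omega)]
    rfl

theorem compositionsList_zero_left {n : ℕ} (h : n ≠ 0) : compositionsList n 0 = [] := by
  rw [compositionsList, if_neg h]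

private theorem list_sum_list_sum_comm {α β M : Type*} [AddCommMonoid M] (L1 : List α)
    (L2 : List β) (h : α → β → M) :
    (L1.map (fun a => (L2.map (h a)).sum)).sum = (L2.map (fun b => (L1.map (fun a => h a b)).sum)).sum := by
  induction L1 with
  | nil => simp
  | cons a L1 ih =>
    simp only [List.map_cons, List.sum_cons, ih]
    rw [← List.sum_map_add]
private theorem sum_map_flatMap {α β M : Type*} [AddCommMonoid M] (l : List α)
    (f : α → List β) (g : β → M) :
    ((l.flatMap f).map g).sum = (l.map (fun a => ((f a).map g).sum)).sum := by
  rw [List.map_flatMap, List.flatMap_def, List.sum_flatten, List.map_map]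
  rfl

theorem forests_decomp {M : Type*} [AddCommMonoid M] :
    ∀ n : ℕ, ∀ g : List PTree → M, ((forestsOfSize n).map g).sum =
      ∑ k ∈ Finset.range (n + 1), ((compositionsList n k).map
        (fun c => ((forestsOfComp c).map g).sum)).sum := by
  intro n
  induction n using Nat.strong_induction_on with
  | _ n ih =>
    intro g
    cases n with
    | zero =>
      rw [forestsOfSize]
      simp [compositionsList, forestsOfComp]
    | succ m =>
      -- normalize LHS
      rw [forestsOfSize, List.map_flatten, List.map_map, List.sum_flatten, List.map_map]
      rw [show (List.sum ∘ List.map g ∘ fun j : {x // x ∈ List.range (m + 1)} =>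
          (treesOfSize (j.1 + 1)).flatMap fun t => (forestsOfSize (m - j.1)).map (t :: ·)) =
          (fun j : {x // x ∈ List.range (m + 1)} => (fun jv =>
            ((((treesOfSize (jv + 1)).flatMap fun t =>
              (forestsOfSize (m - jv)).map (t :: ·))).map g).sum) j.1) from rfl]
      set G : ℕ → M := fun jv =>
        ((((treesOfSize (jv + 1)).flatMap fun t =>
          (forestsOfSize (m - jv)).map (t :: ·))).map g).sum with hG
      rw [List.attach_map_val, list_sum_map_range]
      simp only [hG]
      have lhs_j : ∀ j ∈ Finset.range (m + 1),
          ((((treesOfSize (j + 1)).flatMap fun t =>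
            (forestsOfSize (m - j)).map (t :: ·))).map g).sum =
          ∑ k ∈ Finset.range (m + 1), ((compositionsList (m - j) k).map (fun c =>
            ((treesOfSize (j + 1)).map (fun t =>
              ((forestsOfComp c).map (fun rest => g (t :: rest))).sum)).sum)).sum := by
        intro j hj
        rw [sum_map_flatMap]
        have inner : ∀ t ∈ treesOfSize (j + 1),
            (((forestsOfSize (m - j)).map (t :: ·)).map g).sum =
            ∑ k ∈ Finset.range (m + 1), ((compositionsList (m - j) k).map (fun c =>
              ((forestsOfComp c).map (fun rest => g (t :: rest))).sum)).sum := by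
          intro t ht
          rw [List.map_map]
          rw [show (g ∘ (t :: ·)) = fun rest => g (t :: rest) from rfl]
          rw [ih (m - j) (by omega) (fun rest => g (t :: rest))]
          apply Finset.sum_subset
          · intro k hk
            rw [Finset.mem_range] at hk ⊢
            omega
          · intro k _ hk
            rw [Finset.mem_range, not_lt] at hk
            rw [compositionsList_empty (by omega)]
            rfl
        rw [List.map_congr_left inner, list_sum_finset_sum]
        refine Finset.sum_congr rfl fun k _ => ?_
        rw [list_sum_list_sum_comm]
      rw [Finset.sum_congr rfl lhs_j]
      -- normalize RHS
      rw [Finset.sum_range_succ' _ (m + 1), compositionsList_zero_left (by omega)]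
      rw [show ((([] : List (List ℕ)).map (fun c => ((forestsOfComp c).map g).sum)).sum) = 0
        from rfl, add_zero]
      have rhs_k : ∀ k ∈ Finset.range (m + 1),
          ((compositionsList (m + 1) (k + 1)).map (fun c => ((forestsOfComp c).map g).sum)).sum =
          ∑ j ∈ Finset.range (m + 1), ((compositionsList (m - j) k).map (fun c =>
            ((treesOfSize (j + 1)).map (fun t =>
              ((forestsOfComp c).map (fun rest => g (t :: rest))).sum)).sum)).sum := by
        intro k _
        rw [compositionsList]
        rw [List.map_flatten, List.map_map, List.sum_flatten, List.map_map]
        rw [show (List.sum ∘ List.map (fun c => ((forestsOfComp c).map g).sum) ∘ fun i =>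
            (compositionsList (m + 1 - (i + 1)) k).map ((i + 1) :: ·)) =
            (fun i => (((compositionsList (m + 1 - (i + 1)) k).map ((i + 1) :: ·)).map
              (fun c => ((forestsOfComp c).map g).sum)).sum) from rfl]
        rw [list_sum_map_range]
        refine Finset.sum_congr rfl fun j _ => ?_
        rw [List.map_map, Nat.succ_sub_succ]
        apply congrArg
        apply List.map_congr_left
        intro c _
        show ((forestsOfComp ((j + 1) :: c)).map g).sum = _
        rw [forestsOfComp, sum_map_flatMap]
        apply congrArg
        apply List.map_congr_left
        intro t _
        rw [List.map_map]
        rfl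
      rw [Finset.sum_congr rfl rhs_k, Finset.sum_comm]
theorem forestsOfComp_length : ∀ comp : List ℕ, ∀ l ∈ forestsOfComp comp,
    l.length = comp.length := by
  intro comp
  induction comp with
  | nil => intro l hl; rw [forestsOfComp] at hl; simp at hl; simp [hl]
  | cons c cs ih =>
    intro l hl
    rw [forestsOfComp, List.mem_flatMap] at hl
    obtain ⟨t, _, hmem⟩ := hl
    obtain ⟨rest, hrest, rfl⟩ := List.mem_map.1 hmem
    simp [ih rest hrest]

private theorem list_mul_sum {R α : Type*} [NonUnitalNonAssocSemiring R] (r : R) (L : List α)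
    (g : α → R) : r * (L.map g).sum = (L.map (fun b => r * g b)).sum := by
  induction L with
  | nil => simp
  | cons a L ih => simp [mul_add, ih]

private theorem list_sum_mul_sum {R α β : Type*} [NonUnitalNonAssocSemiring R] (L1 : List α)
    (L2 : List β) (f : α → R) (g : β → R) :
    (L1.map f).sum * (L2.map g).sum =
      (L1.map (fun a => (L2.map (fun b => f a * g b)).sum)).sum := by
  induction L1 with
  | nil => simp
  | cons a L1 ih =>
    simp only [List.map_cons, List.sum_cons, add_mul, ih]
    rw [list_mul_sum]

private theorem list_smul_sum {R M α : Type*} [Semiring R] [AddCommMonoid M] [Module R M]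
    (r : R) (L : List α) (g : α → M) : r • (L.map g).sum = (L.map (fun a => r • g a)).sum := by
  induction L with
  | nil => simp
  | cons a L ih => simp [smul_add, ih]

theorem prod_yK (p : ℝ) : ∀ comp : List ℕ, (comp.map (yK p)).prod =
    ((forestsOfComp comp).map (fun l =>
      AddMonoidAlgebra.single ((l.map toR : List RTree) : Multiset RTree)
        ((l.map (Cp p)).prod))).sum := by
  intro comp
  induction comp with
  | nil =>
    rw [forestsOfComp]
    simp only [List.map_nil, List.prod_nil, List.map_cons, List.sum_cons, List.sum_nil,
      List.map_nil, add_zero]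
    rfl
  | cons c cs ih =>
    rw [List.map_cons, List.prod_cons, ih, yK, list_sum_mul_sum, forestsOfComp,
      sum_map_flatMap]
    apply congrArg
    apply List.map_congr_left
    intro t _
    rw [List.map_map]
    apply congrArg
    apply List.map_congr_left
    intro l _
    show AddMonoidAlgebra.single _ _ * AddMonoidAlgebra.single _ _ = _
    rw [AddMonoidAlgebra.single_mul_single, Multiset.singleton_add]
    rfl

theorem BplusK_list_sum (L : List (HK ℝ)) :
    BplusK ℝ L.sum = (L.map (BplusK ℝ)).sum := by
  induction L with
  | nil => exact AddMonoidAlgebra.mapDomain_zero _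
  | cons a L ih =>
    rw [List.sum_cons, List.map_cons, List.sum_cons, ← ih]
    exact AddMonoidAlgebra.mapDomain_add _ _ _

theorem BplusK_single (a : Multiset RTree) (c : ℝ) :
    BplusK ℝ (AddMonoidAlgebra.single a c) =
      AddMonoidAlgebra.single ({RTree.node a} : Multiset RTree) c :=
  AddMonoidAlgebra.mapDomain_single
theorem x_eq_yK (p : ℝ) (x : ℕ → HK ℝ)
    (h1 : x 1 = AddMonoidAlgebra.single ({RTree.bullet} : Multiset RTree) 1)
    (hrec : ∀ n, 1 ≤ n →
      x (n + 1) = ∑ k ∈ Finset.Icc 1 n, rbinom p k •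
        BplusK ℝ (((compositionsList n k).map (fun comp => (comp.map x).prod)).sum)) :
    ∀ n, 1 ≤ n → x n = yK p n := by
  intro n
  induction n using Nat.strong_induction_on with
  | _ n ih =>
    intro hn
    cases n with
    | zero => omega
    | succ n =>
      by_cases hn0 : n = 0
      · subst hn0
        rw [h1, yK, treesOfSize, forestsOfSize]
        simp only [List.map_cons, List.map_nil, List.sum_cons, List.sum_nil, add_zero]
        rw [Cp_node]
        simp only [List.length_nil, List.map_nil, List.prod_nil, mul_one]
        rw [show rbinom p 0 = 1 from by simp [rbinom]]
        rfl
      · have hstep := hrec n (by omega)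
        rw [hstep]
        have hIcc : ∀ k ∈ Finset.Icc 1 n, rbinom p k •
            BplusK ℝ (((compositionsList n k).map (fun comp => (comp.map x).prod)).sum) =
            ((compositionsList n k).map (fun c => ((forestsOfComp c).map (fun l =>
              AddMonoidAlgebra.single ({toR (.node l)} : Multiset RTree)
                (Cp p (.node l)))).sum)).sum := by
          intro k hk
          rw [Finset.mem_Icc] at hk
          have hx : (compositionsList n k).map (fun comp => (comp.map x).prod)
              = (compositionsList n k).map (fun comp => (comp.map (yK p)).prod) := by
            apply List.map_congr_left
            intro c hc
            congr 1
            apply List.map_congr_left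
            intro a ha
            have hb := compositionsList_mem_pos k n c hc a ha
            exact ih a (by omega) (by omega)
          rw [hx, List.map_congr_left (fun c (_ : c ∈ compositionsList n k) => prod_yK p c),
            BplusK_list_sum, List.map_map, list_smul_sum]
          apply congrArg
          apply List.map_congr_left
          intro c hc
          show rbinom p k • BplusK ℝ (((forestsOfComp c).map _).sum) = _
          rw [BplusK_list_sum, List.map_map, list_smul_sum]
          apply congrArg
          apply List.map_congr_left
          intro l hl
          show rbinom p k • BplusK ℝ (AddMonoidAlgebra.single _ _) = _
          rw [BplusK_single, RTree.node_toR, AddMonoidAlgebra.smul_single]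
          have hlen : l.length = k := by
            rw [forestsOfComp_length c l hl, compositionsList_length k n c hc]
          show AddMonoidAlgebra.single _ (rbinom p k • ((l.map (Cp p)).prod)) = _
          rw [smul_eq_mul, Cp_node, hlen]
        rw [Finset.sum_congr rfl hIcc]
        rw [yK, treesOfSize, List.map_map]
        rw [show ((fun T => AddMonoidAlgebra.single ({toR T} : Multiset RTree) (Cp p T)) ∘
            PTree.node) = (fun l => AddMonoidAlgebra.single ({toR (.node l)} : Multiset RTree)
              (Cp p (.node l))) from rfl]
        rw [forests_decomp n (fun l => AddMonoidAlgebra.single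
          ({toR (.node l)} : Multiset RTree) (Cp p (.node l)))]
        rw [show Finset.range (n + 1) = insert 0 (Finset.Icc 1 n) from by
          ext a; simp; omega]
        rw [Finset.sum_insert (by simp)]
        rw [compositionsList_zero_left hn0]
        simp

/-- The solution of the combinatorial Dyson–Schwinger equation
`X = 1 + B₊(X^p)` in the Connes–Kreimer Hopf algebra, given by `x₁ = •` and
`x_{n+1} = Σ_{k=1}^n binom(p,k) Σ_{n₁+⋯+n_k=n} B₊(x_{n₁}⋯x_{n_k})`, is
`x_n = Σ_{|t|=n} e(t)·C_p(t)·t`; equivalently, the coefficient of `t` in `x_n`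
is `(1/|Sym(t)|)·∏_{v∈V̄(t)} c(v)!·binom(p, c(v))`. -/
theorem dyson_schwinger_solution_HK (p : ℝ) (x : ℕ → HK ℝ)
    (h1 : x 1 = AddMonoidAlgebra.single ({RTree.bullet} : Multiset RTree) 1)
    (hrec : ∀ n, 1 ≤ n →
      x (n + 1) = ∑ k ∈ Finset.Icc 1 n, rbinom p k •
        BplusK ℝ (((compositionsList n k).map (fun comp => (comp.map x).prod)).sum)) :
    (∀ n, 1 ≤ n → x n = xK p n) ∧
    (∀ t : RTree, (eCount t : ℝ) * CpR p t = ((RTree.sym t : ℝ))⁻¹ * cfactCp p t.out) := by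
  refine ⟨fun n hn => ?_, fun t => part2_lemma p t⟩
  rw [x_eq_yK p x h1 hrec n hn, xK_eq_yK]
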